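/- arXiv:0804.1431 — 2 statements merged into one kernel-verified Lean document; each statement's English description precedes it below -/
import Mathlib

section
/- Let 0 < β < 1, f(x) = x/(1+|x|^{1+β}), and let μ be a finite Borel measure on ℝ supported in [a,b] with b - a > x_max := (1/β)^{1/(1+β)}. Define h(x) := ∫ f(x-y) dμ(y). Suppose x₀ ∈ [b - 1/16, b] satisfies h(x₀) ≤ 0 and f(b - x₀) ≤ f(b-a)². Then h(x) ≤ 0 for all x ∈ [a, x₀]. -/
set_option maxHeartbeats 1000000

open MeasureTheory Real

noncomputable def Fdr (β x : ℝ) : ℝ := x / (1 + |x| ^ (1 + β))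

lemma Fdr_den_pos (β x : ℝ) : 0 < 1 + |x| ^ (1 + β) := by positivity

lemma Fdr_nonneg {β x : ℝ} (hx : 0 ≤ x) : 0 ≤ Fdr β x :=
  div_nonneg hx (Fdr_den_pos β x).le

lemma Fdr_nonpos {β x : ℝ} (hx : x ≤ 0) : Fdr β x ≤ 0 :=
  div_nonpos_iff.mpr (Or.inr ⟨hx, (Fdr_den_pos β x).le⟩)

lemma Fdr_pos {β x : ℝ} (hx : 0 < x) : 0 < Fdr β x :=
  div_pos hx (Fdr_den_pos β x)

lemma Fdr_le_self {β x : ℝ} (hx : 0 ≤ x) : Fdr β x ≤ x :=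
  div_le_self hx (by nlinarith [rpow_nonneg (abs_nonneg x) (1 + β)])

lemma Fdr_le_one {β x : ℝ} (hβ0 : 0 < β) (hx : 0 ≤ x) : Fdr β x ≤ 1 := by
  rw [Fdr, abs_of_nonneg hx, div_le_one (by positivity)]
  rcases le_or_gt x 1 with hx1 | hx1
  · nlinarith [rpow_nonneg hx (1 + β)]
  · have h1 : x ^ (1:ℝ) ≤ x ^ (1 + β) :=
      rpow_le_rpow_of_exponent_le hx1.le (by linarith)
    rw [rpow_one] at h1
    linarith

lemma Fdr_abs_le_one {β : ℝ} (hβ0 : 0 < β) (x : ℝ) : |Fdr β x| ≤ 1 := by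
  have h : |Fdr β x| = Fdr β |x| := by
    rw [Fdr, Fdr, abs_div, abs_of_pos (Fdr_den_pos β x), abs_abs]
  rw [h]; exact Fdr_le_one hβ0 (abs_nonneg x)

lemma rpow_one_add' {β s : ℝ} (hβ : 0 < β) (hs : 0 ≤ s) :
    s ^ (1 + β) = s * s ^ β := by
  rcases hs.eq_or_lt with rfl | hs'
  · rw [zero_rpow (by linarith), zero_mul]
  · rw [rpow_add hs', rpow_one]

/-- Bernoulli-type bound: `t * s ^ β ≤ t * t ^ β + β * t ^ β * (s - t)`. -/
lemma bern_aux {β t s : ℝ} (hβ0 : 0 ≤ β) (hβ1 : β ≤ 1) (ht : 0 < t) (hs : 0 ≤ s) :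
    t * s ^ β ≤ t * t ^ β + β * t ^ β * (s - t) := by
  have hx : (-1 : ℝ) ≤ s / t - 1 := by
    have : 0 ≤ s / t := div_nonneg hs ht.le
    linarith
  have h1 : (1 + (s / t - 1)) ^ β ≤ 1 + β * (s / t - 1) :=
    rpow_one_add_le_one_add_mul_self hx hβ0 hβ1
  have h2 : s ^ β = t ^ β * (1 + (s / t - 1)) ^ β := by
    rw [← mul_rpow ht.le (by linarith)]
    congr 1
    field_simp
    ring
  have h3 : 0 ≤ t ^ β := rpow_nonneg ht.le β
  calc t * s ^ β = t * (t ^ β * (1 + (s / t - 1)) ^ β) := by rw [← h2]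
    _ ≤ t * (t ^ β * (1 + β * (s / t - 1))) := by
        apply mul_le_mul_of_nonneg_left _ ht.le
        exact mul_le_mul_of_nonneg_left h1 h3
    _ = t * t ^ β + β * t ^ β * (s - t) := by field_simp

lemma Fdr_mono {β s t : ℝ} (hβ0 : 0 < β) (hβ1 : β ≤ 1) (hs : 0 ≤ s) (hst : s ≤ t)
    (ht : β * t ^ (1 + β) ≤ 1) : Fdr β s ≤ Fdr β t := by
  rcases hs.eq_or_lt with rfl | hs'
  · have : Fdr β 0 = 0 := by simp [Fdr]
    rw [this]; exact Fdr_nonneg (by linarith)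
  have ht' : 0 < t := lt_of_lt_of_le hs' hst
  rw [Fdr, Fdr, abs_of_pos hs', abs_of_pos ht',
    div_le_div_iff₀ (by positivity) (by positivity)]
  have hsp : s ^ (1 + β) = s * s ^ β := rpow_one_add' hβ0 hs'.le
  have htp : t ^ (1 + β) = t * t ^ β := rpow_one_add' hβ0 ht'.le
  have hb : s * t ^ β ≤ s * s ^ β + β * s ^ β * (t - s) :=
    bern_aux hβ0.le hβ1 hs' ht'.le
  have hST : s ^ β ≤ t ^ β := rpow_le_rpow hs hst hβ0.le
  have hβT : β * (t * t ^ β) ≤ 1 := by rwa [htp] at ht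
  have h0S : 0 ≤ s ^ β := rpow_nonneg hs β
  rw [hsp, htp]
  nlinarith [mul_le_mul_of_nonneg_left hb ht'.le,
    mul_nonneg (mul_nonneg (mul_nonneg hβ0.le ht'.le) (sub_nonneg.2 hST)) (sub_nonneg.2 hst),
    mul_nonneg (sub_nonneg.2 hβT) (sub_nonneg.2 hst)]

lemma Fdr_anti {β s t : ℝ} (hβ0 : 0 < β) (hβ1 : β ≤ 1) (hs0 : 0 < s)
    (hs : 1 ≤ β * s ^ (1 + β)) (hst : s ≤ t) : Fdr β t ≤ Fdr β s := by
  have ht' : 0 < t := lt_of_lt_of_le hs0 hst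
  rw [Fdr, Fdr, abs_of_pos hs0, abs_of_pos ht',
    div_le_div_iff₀ (by positivity) (by positivity)]
  have hsp : s ^ (1 + β) = s * s ^ β := rpow_one_add' hβ0 hs0.le
  have htp : t ^ (1 + β) = t * t ^ β := rpow_one_add' hβ0 ht'.le
  have hb : t * s ^ β ≤ t * t ^ β + β * t ^ β * (s - t) :=
    bern_aux hβ0.le hβ1 ht' hs0.le
  have hST : s ^ β ≤ t ^ β := rpow_le_rpow hs0.le hst hβ0.le
  have hβS : 1 ≤ β * (s * s ^ β) := by rwa [hsp] at hs
  have h0S : 0 ≤ s ^ β := rpow_nonneg hs0.le β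
  have hβsT : 1 ≤ β * (s * t ^ β) := by
    nlinarith [mul_le_mul_of_nonneg_left hST (mul_nonneg hβ0.le hs0.le)]
  rw [hsp, htp]
  nlinarith [mul_le_mul_of_nonneg_left hb hs0.le,
    mul_nonneg (sub_nonneg.2 hβsT) (sub_nonneg.2 hst)]

lemma Fdr_lip {β s t : ℝ} (hβ0 : 0 < β) (hβ1 : β ≤ 1) (hs0 : 0 < s)
    (hs : 1 ≤ β * s ^ (1 + β)) (hst : s ≤ t) :
    (1 + β) * (Fdr β s - Fdr β t) ≤ β ^ 2 * (t - s) := by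
  have ht' : 0 < t := lt_of_lt_of_le hs0 hst
  have hsp : s ^ (1 + β) = s * s ^ β := rpow_one_add' hβ0 hs0.le
  have htp : t ^ (1 + β) = t * t ^ β := rpow_one_add' hβ0 ht'.le
  set S := s ^ β with hS
  set T := t ^ β with hT
  have h0S : 0 ≤ S := rpow_nonneg hs0.le β
  have h0T : 0 ≤ T := rpow_nonneg ht'.le β
  have hST : S ≤ T := rpow_le_rpow hs0.le hst hβ0.le
  have hβS : 1 ≤ β * (s * S) := by rwa [hsp] at hs
  have hDpos : 0 < (1 + s * S) * (1 + t * T) :=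
    mul_pos (by nlinarith [mul_nonneg hs0.le h0S]) (by nlinarith [mul_nonneg ht'.le h0T])
  have key : (Fdr β s - Fdr β t) * ((1 + s * S) * (1 + t * T))
      = s * (1 + t * T) - t * (1 + s * S) := by
    rw [Fdr, Fdr, abs_of_pos hs0, abs_of_pos ht', hsp, htp]
    field_simp
  have hb : s * T ≤ s * S + β * S * (t - s) := bern_aux hβ0.le hβ1 hs0 ht'.le
  have hβsT : 1 ≤ β * (s * T) := by
    nlinarith [mul_le_mul_of_nonneg_left hST (mul_nonneg hβ0.le hs0.le)]
  have h2 : (1 + β) * (Fdr β s - Fdr β t) * ((1 + s * S) * (1 + t * T))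
      ≤ β ^ 2 * (t - s) * ((1 + s * S) * (1 + t * T)) := by
    rw [mul_assoc, key]
    nlinarith [mul_le_mul_of_nonneg_left hb ht'.le,
      mul_nonneg (mul_nonneg (mul_nonneg hβ0.le ht'.le) (sub_nonneg.2 hST)) (sub_nonneg.2 hst),
      mul_nonneg (mul_nonneg (mul_nonneg hβ0.le h0S) (sub_nonneg.2 hβsT)) (sub_nonneg.2 hst),
      mul_nonneg (mul_nonneg h0S hs0.le) (sub_nonneg.2 hst),
      mul_nonneg (mul_nonneg h0T ht'.le) (sub_nonneg.2 hst)]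
  exact le_of_mul_le_mul_right h2 hDpos

lemma sixteen_rpow {β : ℝ} (hβ0 : 0 ≤ β) : 1 + 2 * β ≤ (16 : ℝ) ^ β := by
  have hlog : (2 : ℝ) ≤ Real.log 16 := by
    rw [Real.le_log_iff_exp_le (by norm_num)]
    have h1 : Real.exp 2 = Real.exp 1 * Real.exp 1 := by
      rw [← Real.exp_add]; norm_num
    nlinarith [Real.exp_one_lt_d9, Real.exp_pos 1]
  have h2 : (16 : ℝ) ^ β = Real.exp (β * Real.log 16) := by
    rw [rpow_def_of_pos (by norm_num) β, mul_comm]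
  have h3 : β * Real.log 16 + 1 ≤ Real.exp (β * Real.log 16) :=
    Real.add_one_le_exp _
  nlinarith [mul_le_mul_of_nonneg_left hlog hβ0]

lemma Fdr_gain {β xm u d : ℝ} (hβ0 : 0 < β) (hβ1 : β ≤ 1)
    (hxmp : β * xm ^ (1 + β) = 1) (hβxm : β * xm ≤ 1)
    (hxm1 : 1 ≤ xm) (hu : 0 < u) (hu16 : u ≤ 1 / 16) (hd : 0 ≤ d) (hud : u + d ≤ xm) :
    32 * β ^ 2 * d ≤ 51 * (1 + β) * (Fdr β (u + d) - Fdr β u) := by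
  have hudp : 0 < u + d := by linarith
  have hxm0 : 0 < xm := by linarith
  have hup : u ^ (1 + β) = u * u ^ β := rpow_one_add' hβ0 hu.le
  have hudpβ : (u + d) ^ (1 + β) = (u + d) * (u + d) ^ β := rpow_one_add' hβ0 hudp.le
  set S := u ^ β with hS
  set T := (u + d) ^ β with hT
  have h0S : 0 ≤ S := rpow_nonneg hu.le β
  have h0T : 0 ≤ T := rpow_nonneg hudp.le β
  -- Bernoulli: u * T ≤ u * S + β * S * d
  have hb : u * T ≤ u * S + β * S * d := by
    have hb0 := bern_aux hβ0.le hβ1 hu hudp.le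
    rw [show u + d - u = d by ring] at hb0
    exact hb0
  -- S ≤ (1/16)^β and (1/16)^β * (1+2β) ≤ 1
  have hS16 : S ≤ (1 / 16 : ℝ) ^ β := rpow_le_rpow hu.le hu16 hβ0.le
  have hE : (1 / 16 : ℝ) ^ β * (1 + 2 * β) ≤ 1 := by
    have h16 : (1 + 2 * β) ≤ (16:ℝ) ^ β := sixteen_rpow hβ0.le
    have hmul : (1 / 16 : ℝ) ^ β * (16:ℝ) ^ β = 1 := by
      rw [← mul_rpow (by norm_num) (by norm_num)]
      norm_num
    nlinarith [rpow_nonneg (by norm_num : (0:ℝ) ≤ 1/16) β]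
  have hE0 : 0 ≤ (1 / 16 : ℝ) ^ β := rpow_nonneg (by norm_num) β
  -- β * S * (u + d) ≤ (1/16)^β
  have hkey1 : β * S * (u + d) ≤ (1 / 16 : ℝ) ^ β := by
    have h1 : β * (u + d) ≤ 1 := by nlinarith
    nlinarith [mul_nonneg hβ0.le hudp.le]
  -- 3 * (1/16)^β ≤ 3 - 2β
  have hkey2 : 3 * (1 / 16 : ℝ) ^ β ≤ 3 - 2 * β := by nlinarith
  -- numerator bound
  have hnum : 2 * β * d ≤ 3 * ((u + d) * (1 + u * S) - u * (1 + (u + d) * T)) := by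
    nlinarith [mul_le_mul_of_nonneg_left hb (by linarith : (0:ℝ) ≤ u + d),
      mul_nonneg (mul_nonneg h0S hd) hd]
  -- denominators
  have hDu : 1 + u * S ≤ 17 / 16 := by
    have h1 : u ^ (1 + β) ≤ u ^ (1:ℝ) :=
      rpow_le_rpow_of_exponent_ge hu (by linarith) (by linarith)
    rw [rpow_one] at h1
    rw [hup] at h1
    linarith
  have hDud : β * (1 + (u + d) * T) ≤ 1 + β := by
    have h1 : (u + d) ^ (1 + β) ≤ xm ^ (1 + β) := rpow_le_rpow hudp.le hud (by linarith)
    rw [hudpβ] at h1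
    nlinarith
  have hDupos : 0 < 1 + u * S := by nlinarith [mul_nonneg hu.le h0S]
  have hDudpos : 0 < 1 + (u + d) * T := by nlinarith [mul_nonneg hudp.le h0T]
  -- identity
  have key : (Fdr β (u + d) - Fdr β u) * ((1 + u * S) * (1 + (u + d) * T))
      = (u + d) * (1 + u * S) - u * (1 + (u + d) * T) := by
    rw [Fdr, Fdr, abs_of_pos hu, abs_of_pos hudp, hup, hudpβ]
    field_simp
  have hDpos : 0 < (1 + u * S) * (1 + (u + d) * T) := mul_pos hDupos hDudpos
  have h2 : 32 * β ^ 2 * d * ((1 + u * S) * (1 + (u + d) * T))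
      ≤ 51 * (1 + β) * (Fdr β (u + d) - Fdr β u) * ((1 + u * S) * (1 + (u + d) * T)) := by
    rw [mul_assoc (51 * (1+β)), key]
    have hprod : (1 + u * S) * (β * (1 + (u + d) * T)) ≤ (17 / 16) * (1 + β) :=
      mul_le_mul hDu hDud (by nlinarith) (by norm_num)
    have e1 : 32 * β ^ 2 * d * ((1 + u * S) * (1 + (u + d) * T)) ≤ 34 * β * d * (1 + β) := by
      nlinarith [mul_le_mul_of_nonneg_left hprod (by positivity : (0:ℝ) ≤ 32 * β * d)]
    have e2 : 34 * β * d * (1 + β)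
        ≤ 51 * (1 + β) * ((u + d) * (1 + u * S) - u * (1 + (u + d) * T)) := by
      nlinarith [mul_le_mul_of_nonneg_left hnum (by positivity : (0:ℝ) ≤ 17 * (1 + β))]
    linarith
  exact le_of_mul_le_mul_right h2 hDpos

/-- xm facts -/
lemma xm_facts {β xm : ℝ} (hβ0 : 0 < β) (hβ1 : β < 1)
    (hxm : xm = (1 / β) ^ (1 / (1 + β))) :
    1 ≤ xm ∧ β * xm ^ (1 + β) = 1 ∧ β * xm ≤ 1 := by
  have hp : (0:ℝ) < 1 + β := by linarith
  have hβinv : 1 ≤ 1 / β := by rw [le_div_iff₀ hβ0]; linarith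
  have h1 : 1 ≤ xm := by
    rw [hxm]
    calc (1:ℝ) = (1/β) ^ (0:ℝ) := by rw [rpow_zero]
    _ ≤ (1/β) ^ (1/(1+β)) := rpow_le_rpow_of_exponent_le hβinv (by positivity)
  have h2 : xm ^ (1 + β) = 1 / β := by
    rw [hxm, ← rpow_mul (by positivity : (0:ℝ) ≤ 1/β),
      one_div_mul_cancel (by positivity : (1+β) ≠ 0), rpow_one]
  constructor
  · exact h1
  constructor
  · rw [h2]; field_simp
  · have h3 : xm ≤ 1 / β := by
      rw [hxm]
      calc (1/β) ^ (1/(1+β)) ≤ (1/β) ^ (1:ℝ) :=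
        rpow_le_rpow_of_exponent_le hβinv (by rw [div_le_one hp]; linarith)
      _ = 1 / β := rpow_one _
    calc β * xm ≤ β * (1/β) := by nlinarith
    _ = 1 := by field_simp

/-- Key product inequality. -/
lemma keyG {β xm L t u d : ℝ} (hβ0 : 0 < β) (hβ1 : β < 1)
    (hxm : xm = (1 / β) ^ (1 / (1 + β))) (hL : xm < L)
    (ht0 : 0 ≤ t) (htL : t ≤ L) (hu : 0 < u) (hu16 : u ≤ 1 / 16)
    (hfu : Fdr β u ≤ (Fdr β L) ^ 2) (hd : 0 ≤ d) (hudL : u + d ≤ L) :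
    Fdr β (t - d) * Fdr β u ≤ Fdr β t * Fdr β (u + d) := by
  obtain ⟨hxm1, hxmp, hβxm⟩ := xm_facts hβ0 hβ1 hxm
  have hL0 : 0 < L := by linarith
  have hudp : 0 < u + d := by linarith
  have hFu0 : 0 ≤ Fdr β u := Fdr_nonneg hu.le
  have hFt0 : 0 ≤ Fdr β t := Fdr_nonneg ht0
  have hFud0 : 0 ≤ Fdr β (u + d) := Fdr_nonneg hudp.le
  have hc0 : 0 < Fdr β L := Fdr_pos hL0
  have hc1 : Fdr β L ≤ 1 := Fdr_le_one hβ0 hL0.le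
  -- pow condition helpers
  have hpow_le : ∀ w : ℝ, 0 ≤ w → w ≤ xm → β * w ^ (1 + β) ≤ 1 := by
    intro w hw0 hw
    have := rpow_le_rpow hw0 hw (by linarith : (0:ℝ) ≤ 1 + β)
    nlinarith
  have hpow_ge : ∀ w : ℝ, xm ≤ w → 1 ≤ β * w ^ (1 + β) := by
    intro w hw
    have := rpow_le_rpow (by linarith : (0:ℝ) ≤ xm) hw (by linarith : (0:ℝ) ≤ 1 + β)
    nlinarith
  -- F u ≤ F (u+d)
  have hS : Fdr β u ≤ Fdr β (u + d) := by
    rcases le_or_gt (u + d) xm with hcase | hcase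
    · exact Fdr_mono hβ0 hβ1.le hu.le (by linarith) (hpow_le _ hudp.le hcase)
    · have h1 : Fdr β L ≤ Fdr β (u + d) :=
        Fdr_anti hβ0 hβ1.le hudp (hpow_ge _ hcase.le) hudL
      nlinarith
  rcases le_or_gt (t - d) 0 with htd | htd
  · calc Fdr β (t - d) * Fdr β u ≤ 0 :=
        mul_nonpos_iff.mpr (Or.inr ⟨Fdr_nonpos htd, hFu0⟩)
    _ ≤ Fdr β t * Fdr β (u + d) := mul_nonneg hFt0 hFud0
  rcases le_or_gt t xm with htxm | htxm
  · -- t ≤ xm : plain monotonicity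
    have h1 : Fdr β (t - d) ≤ Fdr β t :=
      Fdr_mono hβ0 hβ1.le htd.le (by linarith) (hpow_le _ ht0 htxm)
    exact mul_le_mul h1 hS hFu0 hFt0
  -- t > xm
  have hFt : Fdr β L ≤ Fdr β t := Fdr_anti hβ0 hβ1.le (by linarith) (hpow_ge _ htxm.le) htL
  rcases le_or_gt xm (u + d) with hudxm | hudxm
  · -- f(u+d) ≥ c : crude bound
    have hFud : Fdr β L ≤ Fdr β (u + d) := Fdr_anti hβ0 hβ1.le hudp (hpow_ge _ hudxm) hudL
    have h1 : Fdr β (t - d) ≤ 1 := Fdr_le_one hβ0 htd.le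
    nlinarith [mul_le_mul h1 hfu hFu0 (by norm_num : (0:ℝ) ≤ 1),
      mul_le_mul hFt hFud hc0.le hFt0]
  -- hard case : t > xm, u + d < xm
  have hlip : (1 + β) * (Fdr β (t - d) - Fdr β t) ≤ β ^ 2 * d := by
    rcases le_or_gt xm (t - d) with hcase | hcase
    · have := Fdr_lip hβ0 hβ1.le htd (hpow_ge _ hcase) (by linarith : t - d ≤ t)
      rw [show t - (t - d) = d by ring] at this
      exact this
    · have h1 : Fdr β (t - d) ≤ Fdr β xm :=
        Fdr_mono hβ0 hβ1.le htd.le hcase.le (by rw [hxmp])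
      have h2 := Fdr_lip hβ0 hβ1.le (by linarith : (0:ℝ) < xm)
        (le_of_eq hxmp.symm) htxm.le
      nlinarith [sq_nonneg β]
  have hgain := Fdr_gain hβ0 hβ1.le hxmp hβxm hxm1 hu hu16 hd hudxm.le
  have hfu32 : 51 * Fdr β u ≤ 32 * Fdr β L := by
    rcases le_or_gt (51 / 512 : ℝ) (Fdr β L) with hcL | hcL
    · have h9 : Fdr β u ≤ u := Fdr_le_self hu.le
      linarith
    · nlinarith
  have hW : 0 ≤ Fdr β (u + d) - Fdr β u := by linarith
  nlinarith [mul_le_mul_of_nonneg_right hlip hFu0,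
    mul_le_mul_of_nonneg_right hfu32 (by positivity : (0:ℝ) ≤ β ^ 2 * d),
    mul_le_mul_of_nonneg_right hgain hc0.le,
    mul_le_mul_of_nonneg_right hFt (by positivity : (0:ℝ) ≤ 51 * (1 + β) * (Fdr β (u+d) - Fdr β u)),
    hβ0]

/-- Key scalar inequality : c · f(t-d) ≤ f(t). -/
lemma keyI {β xm L t d : ℝ} (hβ0 : 0 < β) (hβ1 : β < 1)
    (hxm : xm = (1 / β) ^ (1 / (1 + β))) (hL : xm < L)
    (ht0 : 0 ≤ t) (htL : t ≤ L) (hd : 0 ≤ d) :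
    Fdr β L * Fdr β (t - d) ≤ Fdr β t := by
  obtain ⟨hxm1, hxmp, hβxm⟩ := xm_facts hβ0 hβ1 hxm
  have hL0 : 0 < L := by linarith
  have hc0 : 0 < Fdr β L := Fdr_pos hL0
  have hc1 : Fdr β L ≤ 1 := Fdr_le_one hβ0 hL0.le
  have hFt0 : 0 ≤ Fdr β t := Fdr_nonneg ht0
  rcases le_or_gt (t - d) 0 with htd | htd
  · have h9 : Fdr β (t - d) ≤ 0 := Fdr_nonpos htd
    nlinarith
  have hpow_le : β * t ^ (1 + β) ≤ 1 → True := fun _ => trivial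
  rcases le_or_gt t xm with htxm | htxm
  · have h1 : Fdr β (t - d) ≤ Fdr β t := by
      apply Fdr_mono hβ0 hβ1.le htd.le (by linarith)
      have := rpow_le_rpow ht0 htxm (by linarith : (0:ℝ) ≤ 1 + β)
      nlinarith
    nlinarith [Fdr_nonneg (β := β) htd.le]
  · have hFt : Fdr β L ≤ Fdr β t := by
      apply Fdr_anti hβ0 hβ1.le (by linarith) _ htL
      have := rpow_le_rpow (by linarith : (0:ℝ) ≤ xm) htxm.le (by linarith : (0:ℝ) ≤ 1 + β)
      nlinarith
    nlinarith [Fdr_le_one (x := t - d) hβ0 htd.le]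

theorem drift_nonpos_left (β : ℝ) (hβ0 : 0 < β) (hβ1 : β < 1)
    (f : ℝ → ℝ) (hf : ∀ x, f x = x / (1 + |x| ^ (1 + β)))
    (xmax : ℝ) (hx : xmax = (1 / β) ^ (1 / (1 + β)))
    (a b : ℝ) (hbig : xmax < b - a)
    (μ : Measure ℝ) [IsFiniteMeasure μ] (hsupp : μ (Set.Icc a b)ᶜ = 0)
    (h : ℝ → ℝ) (hh : ∀ x, h x = ∫ y, f (x - y) ∂μ)
    (x₀ : ℝ) (hx₀ : x₀ ∈ Set.Icc (b - 1/16) b)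
    (hh0 : h x₀ ≤ 0) (hfx₀ : f (b - x₀) ≤ (f (b - a)) ^ 2) :
    ∀ x ∈ Set.Icc a x₀, h x ≤ 0 := by
  have hfe : f = Fdr β := funext fun w => by rw [hf w, Fdr]
  subst hfe
  obtain ⟨hbx₀, hx₀b⟩ := hx₀
  obtain ⟨hxm1, hxmp, hβxm⟩ := xm_facts hβ0 hβ1 hx
  intro x hxmem
  obtain ⟨hax, hxx₀⟩ := hxmem
  have hax₀ : a ≤ x₀ := le_trans hax hxx₀
  have hβp : (0:ℝ) < 1 + β := by linarith
  -- continuity, integrability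
  have hcont : Continuous (Fdr β) := by
    apply Continuous.div continuous_id
    · exact continuous_const.add
        ((continuous_abs).rpow_const (fun w => Or.inr (by linarith)))
    · intro w; exact ne_of_gt (Fdr_den_pos β w)
  have hodd : ∀ w : ℝ, Fdr β (-w) = - Fdr β w := by
    intro w; rw [Fdr, Fdr, abs_neg, neg_div]
  have hinteg : ∀ e : ℝ, Integrable (fun y => Fdr β (e - y)) μ := by
    intro e
    refine ⟨(hcont.comp (continuous_const.sub continuous_id)).aestronglyMeasurable, ?_⟩
    apply HasFiniteIntegral.of_bounded (C := 1)
    filter_upwards with y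
    simpa [Real.norm_eq_abs] using Fdr_abs_le_one hβ0 (e - y)
  have hinteg' : ∀ e : ℝ, Integrable (fun z => Fdr β (z - e)) μ := by
    intro e
    have heq : (fun z => Fdr β (z - e)) = fun z => -Fdr β (e - z) :=
      funext fun z => by rw [show z - e = -(e - z) by ring, hodd]
    rw [heq]; exact (hinteg e).neg
  -- splitting of integrals
  have hdisj : Disjoint (Set.Icc a x₀) (Set.Ioc x₀ b) := by
    rw [Set.disjoint_left]; rintro y ⟨_, h1⟩ ⟨h2, _⟩; linarith
  have hsplit : ∀ e : ℝ, (∫ y, Fdr β (e - y) ∂μ)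
      = (∫ y in Set.Icc a x₀, Fdr β (e - y) ∂μ)
        + ∫ y in Set.Ioc x₀ b, Fdr β (e - y) ∂μ := by
    intro e
    have h1 : (∫ y in Set.Icc a b, Fdr β (e - y) ∂μ)
        + ∫ y in (Set.Icc a b)ᶜ, Fdr β (e - y) ∂μ = ∫ y, Fdr β (e - y) ∂μ :=
      integral_add_compl measurableSet_Icc (hinteg e)
    have h2 : (∫ y in (Set.Icc a b)ᶜ, Fdr β (e - y) ∂μ) = 0 := by
      rw [Measure.restrict_eq_zero.mpr hsupp]
      exact integral_zero_measure _
    have h3 : Set.Icc a x₀ ∪ Set.Ioc x₀ b = Set.Icc a b :=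
      Set.Icc_union_Ioc_eq_Icc hax₀ hx₀b
    rw [← h1, h2, add_zero, ← h3,
      setIntegral_union hdisj measurableSet_Ioc
        ((hinteg e).integrableOn) ((hinteg e).integrableOn)]
  have hIoc2 : ∀ e : ℝ, (∫ z in Set.Ioc x₀ b, Fdr β (e - z) ∂μ)
      = - ∫ z in Set.Ioc x₀ b, Fdr β (z - e) ∂μ := by
    intro e
    rw [← integral_neg]
    congr 1
    funext z
    rw [show e - z = -(z - e) by ring, hodd]
  set c := Fdr β (b - a) with hc
  set A := ∫ y in Set.Icc a x₀, Fdr β (x₀ - y) ∂μ with hA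
  set P := ∫ y in Set.Icc a x₀, Fdr β (x - y) ∂μ with hP
  set Bq := ∫ z in Set.Ioc x₀ b, Fdr β (z - x₀) ∂μ with hBq
  set N := ∫ z in Set.Ioc x₀ b, Fdr β (z - x) ∂μ with hN
  have hx₀eq : A - Bq ≤ 0 := by
    have := hh0
    rw [hh x₀, hsplit x₀, hIoc2 x₀] at this
    linarith
  have hA0 : 0 ≤ A :=
    setIntegral_nonneg measurableSet_Icc fun y hy => Fdr_nonneg (by linarith [hy.2])
  have hBq0 : 0 ≤ Bq :=
    setIntegral_nonneg measurableSet_Ioc fun z hz => Fdr_nonneg (by linarith [hz.1])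
  have hN0 : 0 ≤ N :=
    setIntegral_nonneg measurableSet_Ioc fun z hz => Fdr_nonneg (by linarith [hz.1])
  -- pointwise product inequality, integrated in z
  have key1 : ∀ y ∈ Set.Icc a x₀, Fdr β (x - y) * Bq ≤ Fdr β (x₀ - y) * N := by
    intro y hy
    have hpt : ∀ z ∈ Set.Ioc x₀ b,
        Fdr β (x - y) * Fdr β (z - x₀) ≤ Fdr β (x₀ - y) * Fdr β (z - x) := by
      intro z hz
      have hfu : Fdr β (z - x₀) ≤ (Fdr β (b - a)) ^ 2 := by
        have hmon : Fdr β (z - x₀) ≤ Fdr β (b - x₀) := by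
          apply Fdr_mono hβ0 hβ1.le (by linarith [hz.1]) (by linarith [hz.2])
          have h4 : (b - x₀ : ℝ) ≤ xmax := by linarith
          have := rpow_le_rpow (by linarith : (0:ℝ) ≤ b - x₀) h4 (by linarith : (0:ℝ) ≤ 1+β)
          nlinarith
        exact le_trans hmon hfx₀
      have hG := keyG (t := x₀ - y) (u := z - x₀) (d := x₀ - x) hβ0 hβ1 hx hbig
        (by linarith [hy.2]) (by linarith [hy.1]) (by linarith [hz.1])
        (by linarith [hz.2]) hfu (by linarith) (by linarith [hz.2])
      rw [show x₀ - y - (x₀ - x) = x - y by ring,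
        show z - x₀ + (x₀ - x) = z - x by ring] at hG
      exact hG
    calc Fdr β (x - y) * Bq
        = ∫ z in Set.Ioc x₀ b, Fdr β (x - y) * Fdr β (z - x₀) ∂μ :=
          (integral_const_mul _ _).symm
      _ ≤ ∫ z in Set.Ioc x₀ b, Fdr β (x₀ - y) * Fdr β (z - x) ∂μ :=
          setIntegral_mono_on (((hinteg' x₀).integrableOn).const_mul _)
            (((hinteg' x).integrableOn).const_mul _) measurableSet_Ioc hpt
      _ = Fdr β (x₀ - y) * N := integral_const_mul _ _
  have key2 : P * Bq ≤ A * N := by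
    calc P * Bq = ∫ y in Set.Icc a x₀, Fdr β (x - y) * Bq ∂μ :=
          (integral_mul_const _ _).symm
      _ ≤ ∫ y in Set.Icc a x₀, Fdr β (x₀ - y) * N ∂μ :=
          setIntegral_mono_on (((hinteg x).integrableOn).mul_const _)
            (((hinteg x₀).integrableOn).mul_const _) measurableSet_Icc key1
      _ = A * N := integral_mul_const _ _
  -- conclude
  rw [hh x, hsplit x, hIoc2 x]
  rw [← sub_eq_add_neg, sub_nonpos]
  rcases hBq0.eq_or_lt with hB | hB
  · -- Bq = 0, hence A = 0, use keyI
    have hAz : A = 0 := le_antisymm (by linarith) hA0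
    have key3 : ∀ y ∈ Set.Icc a x₀, c * Fdr β (x - y) ≤ Fdr β (x₀ - y) := by
      intro y hy
      have hI := keyI (t := x₀ - y) (d := x₀ - x) hβ0 hβ1 hx hbig
        (by linarith [hy.2]) (by linarith [hy.1]) (by linarith)
      rw [show x₀ - y - (x₀ - x) = x - y by ring] at hI
      exact hI
    have hcP : c * P ≤ A := by
      calc c * P = ∫ y in Set.Icc a x₀, c * Fdr β (x - y) ∂μ :=
            (integral_const_mul _ _).symm
        _ ≤ ∫ y in Set.Icc a x₀, Fdr β (x₀ - y) ∂μ :=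
            setIntegral_mono_on (((hinteg x).integrableOn).const_mul _)
              ((hinteg x₀).integrableOn) measurableSet_Icc key3
        _ = A := rfl
    have hcpos : 0 < c := Fdr_pos (by linarith)
    nlinarith
  · -- Bq > 0
    have h5 : A * N ≤ Bq * N := mul_le_mul_of_nonneg_right (by linarith) hN0
    have h6 : P * Bq ≤ N * Bq := by nlinarith
    exact le_of_mul_le_mul_right h6 hB
end

section
/- Let 0 < β < 1, f(x) = x/(1+|x|^{1+β}), and let μ be a finite measure supported in [a,b]. Define h(x) = ∫ f(x-y) dμ(y). Then h is differentiable and for all x ∈ [b - 1/2, b], h'(x) ≥ -h(x); consequently x ↦ h(x)e^x is nondecreasing on [b-1/2, b]. -/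
open MeasureTheory

namespace DriftAux

noncomputable def fe (β : ℝ) : ℝ → ℝ := fun z => z / (1 + |z| ^ (1 + β))
noncomputable def phi (β : ℝ) : ℝ → ℝ :=
  fun z => (1 - β * |z| ^ (1 + β)) / (1 + |z| ^ (1 + β)) ^ 2

lemma aux_A {β : ℝ} (hβ0 : 0 < β) (z : ℝ) :
    ∃ D, HasDerivAt (fun z : ℝ => |z| ^ (1 + β)) D z ∧ z * D = (1 + β) * |z| ^ (1 + β) := by
  have hexp : 1 + β - 1 = β := by ring
  rcases lt_trichotomy z 0 with hz | hz | hz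
  · refine ⟨(1 + β) * (-z) ^ β * (-1), ?_, ?_⟩
    · have h1 : HasDerivAt (fun u : ℝ => u ^ (1 + β)) ((1 + β) * (-z) ^ (1 + β - 1)) (-z) :=
        Real.hasDerivAt_rpow_const (Or.inl (by linarith))
      have h2 : HasDerivAt (fun x : ℝ => -x) (-1) z := by
        exact hasDerivAt_neg z
      have h3 := h1.comp z h2
      rw [hexp] at h3
      refine h3.congr_of_eventuallyEq ?_
      filter_upwards [eventually_lt_nhds hz] with x hx
      simp [Function.comp, abs_of_neg hx]
    · have hpos : (0:ℝ) < -z := by linarith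
      have : (-z) ^ (1 + β) = (-z) ^ (1:ℝ) * (-z) ^ β := Real.rpow_add hpos 1 β
      rw [abs_of_neg hz, this, Real.rpow_one]
      ring
  · subst hz
    refine ⟨0, ?_, by simp [Real.zero_rpow (by positivity : (1:ℝ) + β ≠ 0)]⟩
    rw [hasDerivAt_iff_tendsto_slope]
    have hb : ∀ᶠ x in nhdsWithin (0:ℝ) {(0:ℝ)}ᶜ,
        ‖slope (fun z : ℝ => |z| ^ (1 + β)) 0 x‖ ≤ |x| ^ β := by
      filter_upwards [self_mem_nhdsWithin] with x hx
      have hx0 : x ≠ 0 := hx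
      have hxa : (0:ℝ) < |x| := abs_pos.mpr hx0
      have hsplit : |x| ^ (1 + β) = |x| ^ (1:ℝ) * |x| ^ β := Real.rpow_add hxa 1 β
      rw [slope_def_field]
      simp only [abs_zero]
      rw [Real.zero_rpow (by positivity)]
      rw [sub_zero, sub_zero, hsplit, Real.rpow_one]
      rw [Real.norm_eq_abs, abs_div, abs_mul, abs_abs, abs_of_nonneg (Real.rpow_nonneg (abs_nonneg x) β)]
      have hxne : |x| ≠ 0 := abs_ne_zero.mpr hx0
      exact le_of_eq (by field_simp)
    refine squeeze_zero_norm' hb ?_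
    have hc : ContinuousAt (fun x : ℝ => |x| ^ β) 0 := by
      have h1 : ContinuousAt (fun u : ℝ => u ^ β) (|0|) := by
        simpa using Real.continuousAt_rpow_const 0 β (Or.inr hβ0.le)
      exact h1.comp continuous_abs.continuousAt
    have : Filter.Tendsto (fun x : ℝ => |x| ^ β) (nhds 0) (nhds 0) := by
      have := hc.tendsto
      simpa [Real.zero_rpow hβ0.ne'] using this
    exact this.mono_left nhdsWithin_le_nhds
  · refine ⟨(1 + β) * z ^ β, ?_, ?_⟩
    · have h1 : HasDerivAt (fun u : ℝ => u ^ (1 + β)) ((1 + β) * z ^ (1 + β - 1)) z :=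
        Real.hasDerivAt_rpow_const (Or.inl (by linarith))
      rw [hexp] at h1
      refine h1.congr_of_eventuallyEq ?_
      filter_upwards [eventually_gt_nhds hz] with x hx
      simp [abs_of_pos hx]
    · have : z ^ (1 + β) = z ^ (1:ℝ) * z ^ β := Real.rpow_add hz 1 β
      rw [abs_of_pos hz, this, Real.rpow_one]
      ring

lemma fe_hasDerivAt {β : ℝ} (hβ0 : 0 < β) (z : ℝ) :
    HasDerivAt (fe β) (phi β z) z := by
  obtain ⟨D, hD, hzD⟩ := aux_A hβ0 z
  have ht0 : (0:ℝ) ≤ |z| ^ (1 + β) := Real.rpow_nonneg (abs_nonneg z) _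
  have hden : (0:ℝ) < 1 + |z| ^ (1 + β) := by linarith
  have h1 : HasDerivAt (fun z : ℝ => z / (1 + |z| ^ (1 + β)))
      ((1 * (1 + |z| ^ (1 + β)) - z * (0 + D)) / (1 + |z| ^ (1 + β)) ^ 2) z :=
    (hasDerivAt_id z).div ((hasDerivAt_const z 1).add hD) hden.ne'
  have heq : (1 * (1 + |z| ^ (1 + β)) - z * (0 + D)) / (1 + |z| ^ (1 + β)) ^ 2 = phi β z := by
    rw [phi]
    congr 1
    rw [zero_add, hzD]
    ring
  rw [heq] at h1
  exact h1

lemma phi_abs_le {β : ℝ} (hβ0 : 0 < β) (hβ1 : β < 1) (z : ℝ) : |phi β z| ≤ 1 := by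
  set t := |z| ^ (1 + β) with ht
  have ht0 : (0:ℝ) ≤ t := Real.rpow_nonneg (abs_nonneg z) _
  rw [phi]
  rw [abs_div, abs_of_pos (by positivity : (0:ℝ) < (1 + t) ^ 2)]
  rw [div_le_one (by positivity)]
  have h1 : |1 - β * t| ≤ 1 + β * t := by
    rw [abs_le]; constructor <;> nlinarith
  nlinarith [sq_nonneg t]

lemma fe_abs_le {β : ℝ} (hβ0 : 0 < β) (z : ℝ) : |fe β z| ≤ 1 := by
  set t := |z| ^ (1 + β) with ht
  have ht0 : (0:ℝ) ≤ t := Real.rpow_nonneg (abs_nonneg z) _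
  rw [fe]
  rw [abs_div, abs_of_pos (by positivity : (0:ℝ) < 1 + t)]
  rw [div_le_one (by positivity)]
  rcases le_or_gt (|z|) 1 with hz | hz
  · linarith
  · have : |z| ^ (1:ℝ) ≤ |z| ^ (1 + β) :=
      Real.rpow_le_rpow_of_exponent_le hz.le (by linarith)
    rw [Real.rpow_one] at this
    linarith

lemma two_rpow_lb {β : ℝ} (hβ0 : 0 < β) (hβ1 : β < 1) : β + 1/2 ≤ (2:ℝ) ^ β := by
  have h1 : (2:ℝ) ^ β = Real.exp (Real.log 2 * β) := by
    rw [Real.rpow_def_of_pos two_pos]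
  have h2 : Real.log 2 * β + 1 ≤ Real.exp (Real.log 2 * β) := Real.add_one_le_exp _
  have h3 : (0.6931471803 : ℝ) < Real.log 2 := Real.log_two_gt_d9
  nlinarith

lemma key_ineq {β : ℝ} (hβ0 : 0 < β) (hβ1 : β < 1) {z : ℝ} (hz : -(1/2) ≤ z) :
    -(fe β z) ≤ phi β z := by
  set t := |z| ^ (1 + β) with ht
  have ht0 : (0:ℝ) ≤ t := Real.rpow_nonneg (abs_nonneg z) _
  have hden : (0:ℝ) < 1 + t := by linarith
  have hkey : 0 ≤ 1 - β * t + z * (1 + t) := by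
    rcases le_or_gt 0 z with hz0 | hz0
    · rcases le_or_gt β z with hβz | hβz
      · nlinarith
      · rcases eq_or_lt_of_le hz0 with h0 | h0
        · have : t = 0 := by
            rw [ht, ← h0, abs_zero, Real.zero_rpow (by positivity)]
          rw [this]; nlinarith
        · have htz : t ≤ z := by
            have h1 : |z| ^ (1 + β) ≤ |z| ^ (1:ℝ) :=
              Real.rpow_le_rpow_of_exponent_ge (abs_pos.mpr h0.ne') (by rw [abs_of_pos h0]; linarith) (by linarith)
            rw [Real.rpow_one, abs_of_pos h0] at h1
            rw [ht, abs_of_pos h0]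
            exact h1
          nlinarith
    · set s := -z with hs
      have hs0 : 0 < s := by simp [hs]; linarith
      have hs2 : s ≤ 1/2 := by simp [hs]; linarith
      have habs : |z| = s := by rw [abs_of_neg hz0]
      have hts : t = s * s ^ β := by
        rw [ht, habs, Real.rpow_add hs0 1 β, Real.rpow_one]
      have hsb : s ^ β ≤ (1/2 : ℝ) ^ β :=
        Real.rpow_le_rpow hs0.le hs2 hβ0.le
      have h12 : (1/2 : ℝ) ^ β * (β + 1/2) ≤ 1 := by
        have h2b : (0:ℝ) < (2:ℝ) ^ β := Real.rpow_pos_of_pos two_pos β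
        have heq2 : (1/2 : ℝ) ^ β = ((2:ℝ) ^ β)⁻¹ := by
          rw [one_div, ← Real.inv_rpow (by norm_num : (0:ℝ) ≤ 2)]
        rw [heq2, inv_mul_le_iff₀ h2b, mul_one]
        exact two_rpow_lb hβ0 hβ1
      have hsbpos : (0:ℝ) ≤ s ^ β := Real.rpow_nonneg hs0.le β
      have hhalfpos : (0:ℝ) ≤ (1/2:ℝ) ^ β := Real.rpow_nonneg (by norm_num) β
      -- need : 1 - β t + z (1+t) = 1 - s - t(β+s) ≥ 0
      have hbound : t * (β + s) ≤ s := by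
        calc t * (β + s) = s * (s ^ β * (β + s)) := by rw [hts]; ring
        _ ≤ s * ((1/2)^β * (β + 1/2)) := by
            apply mul_le_mul_of_nonneg_left _ hs0.le
            apply mul_le_mul hsb (by linarith) (by linarith) hhalfpos
        _ ≤ s * 1 := mul_le_mul_of_nonneg_left h12 hs0.le
        _ = s := mul_one s
      have hz' : z = -s := by rw [hs]; ring
      rw [hz']
      nlinarith
  have hsum : phi β z + fe β z = (1 - β * t + z * (1 + t)) / (1 + t) ^ 2 := by
    rw [phi, fe, ← ht]
    field_simp
  have hnn : 0 ≤ (1 - β * t + z * (1 + t)) / (1 + t) ^ 2 :=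
    div_nonneg hkey (by positivity)
  linarith [hsum ▸ hnn]

lemma fe_cont {β : ℝ} (hβ0 : 0 < β) : Continuous (fe β) := by
  apply Continuous.div continuous_id
  · exact continuous_const.add (continuous_abs.rpow_const fun x => Or.inr (by positivity))
  · intro x
    have : (0:ℝ) ≤ |x| ^ (1 + β) := Real.rpow_nonneg (abs_nonneg x) _
    positivity

lemma phi_cont {β : ℝ} (hβ0 : 0 < β) : Continuous (phi β) := by
  apply Continuous.div
  · exact continuous_const.sub (continuous_const.mul
      (continuous_abs.rpow_const fun x => Or.inr (by positivity)))
  · exact (continuous_const.add (continuous_abs.rpow_const fun x => Or.inr (by positivity))).pow 2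
  · intro x
    have : (0:ℝ) ≤ |x| ^ (1 + β) := Real.rpow_nonneg (abs_nonneg x) _
    positivity

lemma fe_lip {β : ℝ} (hβ0 : 0 < β) (hβ1 : β < 1) : LipschitzWith 1 (fe β) := by
  apply lipschitzWith_of_nnnorm_deriv_le (fun z => (fe_hasDerivAt hβ0 z).differentiableAt)
  intro z
  rw [(fe_hasDerivAt hβ0 z).deriv]
  rw [← NNReal.coe_le_coe, coe_nnnorm, Real.norm_eq_abs]
  exact_mod_cast phi_abs_le hβ0 hβ1 z

end DriftAux

theorem drift_deriv_bound (β : ℝ) (hβ0 : 0 < β) (hβ1 : β < 1)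
    (f : ℝ → ℝ) (hf : ∀ x, f x = x / (1 + |x| ^ (1 + β)))
    (a b : ℝ) (hab : a ≤ b)
    (μ : Measure ℝ) [IsFiniteMeasure μ] (hsupp : μ (Set.Icc a b)ᶜ = 0)
    (h : ℝ → ℝ) (hh : ∀ x, h x = ∫ y, f (x - y) ∂μ) :
    Differentiable ℝ h ∧
    (∀ x ∈ Set.Icc (b - 1/2) b, -h x ≤ deriv h x) ∧
    MonotoneOn (fun x => h x * Real.exp x) (Set.Icc (b - 1/2) b) := by
  have hfe : f = DriftAux.fe β := funext hf
  subst hfe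
  have hhe : h = fun x => ∫ y, DriftAux.fe β (x - y) ∂μ := funext hh
  subst hhe
  have hmeas : ∀ x : ℝ, AEStronglyMeasurable (fun y => DriftAux.fe β (x - y)) μ := fun x =>
    ((DriftAux.fe_cont hβ0).comp (continuous_const.sub continuous_id)).aestronglyMeasurable
  have hint : ∀ x : ℝ, Integrable (fun y => DriftAux.fe β (x - y)) μ := fun x =>
    (integrable_const (1:ℝ)).mono' (hmeas x) (Filter.Eventually.of_forall fun y => by
      rw [Real.norm_eq_abs]; exact DriftAux.fe_abs_le hβ0 _)
  have hkey : ∀ x₀ : ℝ, Integrable (fun y => DriftAux.phi β (x₀ - y)) μ ∧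
      HasDerivAt (fun x => ∫ y, DriftAux.fe β (x - y) ∂μ)
        (∫ y, DriftAux.phi β (x₀ - y) ∂μ) x₀ := by
    intro x₀
    apply hasDerivAt_integral_of_dominated_loc_of_lip (bound := fun _ => (1:ℝ)) (s := Metric.ball x₀ 1) (Metric.ball_mem_nhds x₀ one_pos)
      (Filter.Eventually.of_forall fun x => hmeas x) (hint x₀)
      (((DriftAux.phi_cont hβ0).comp (continuous_const.sub continuous_id)).aestronglyMeasurable)
      ?_ (integrable_const 1) ?_
    · refine Filter.Eventually.of_forall fun y => ?_
      have hl : LipschitzWith 1 (fun x => DriftAux.fe β (x - y)) := by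
        refine LipschitzWith.of_dist_le_mul fun x1 x2 => ?_
        have hd := (DriftAux.fe_lip hβ0 hβ1).dist_le_mul (x1 - y) (x2 - y)
        simpa [dist_sub_right] using hd
      have h1 : Real.nnabs (1:ℝ) = 1 := by simp
      rw [h1]
      exact hl.lipschitzOnWith
    · refine Filter.Eventually.of_forall fun y => ?_
      have h1 := (DriftAux.fe_hasDerivAt hβ0 (x₀ - y)).comp x₀ ((hasDerivAt_id x₀).sub_const y)
      rw [mul_one] at h1
      exact h1
  have hD : Differentiable ℝ (fun x => ∫ y, DriftAux.fe β (x - y) ∂μ) :=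
    fun x => ((hkey x).2).differentiableAt
  have hderiv_eq : ∀ x, deriv (fun x => ∫ y, DriftAux.fe β (x - y) ∂μ) x
      = ∫ y, DriftAux.phi β (x - y) ∂μ := fun x => ((hkey x).2).deriv
  have hae : ∀ᵐ y ∂μ, y ∈ Set.Icc a b := by
    rw [MeasureTheory.ae_iff]
    exact hsupp
  have hbnd : ∀ x ∈ Set.Icc (b - 1/2) b,
      -(∫ y, DriftAux.fe β (x - y) ∂μ) ≤ deriv (fun x => ∫ y, DriftAux.fe β (x - y) ∂μ) x := by
    intro x hx
    rw [hderiv_eq, ← integral_neg]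
    apply integral_mono_ae ((hint x).neg) (hkey x).1
    filter_upwards [hae] with y hy
    exact DriftAux.key_ineq hβ0 hβ1 (by simp only [Set.mem_Icc] at hx hy; linarith : -(1/2) ≤ x - y)
  refine ⟨hD, hbnd, ?_⟩
  apply monotoneOn_of_deriv_nonneg (convex_Icc _ _)
  · exact (hD.continuous.mul Real.continuous_exp).continuousOn
  · exact (hD.mul Real.differentiable_exp).differentiableOn
  · intro x hx
    have hx' : x ∈ Set.Icc (b - 1/2) b := interior_subset hx
    have hgd : HasDerivAt (fun x => (∫ y, DriftAux.fe β (x - y) ∂μ) * Real.exp x)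
        (deriv (fun x => ∫ y, DriftAux.fe β (x - y) ∂μ) x * Real.exp x
          + (∫ y, DriftAux.fe β (x - y) ∂μ) * Real.exp x) x :=
      ((hD x).hasDerivAt).mul (Real.hasDerivAt_exp x)
    rw [hgd.deriv]
    have hb2 := hbnd x hx'
    nlinarith [Real.exp_pos x]
end
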